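/- Let 1 ≤ d ≤ n and let f : {0,1}^n → {0,1} be an affine disperser for dimension d + 1. If f = φ_1 ∨ φ_2 ∨ ⋯ ∨ φ_m where each φ_i is a 2-CNF formula in the variables x_1,…,x_n (i.e., f(x) = 1 if and only if some φ_i is satisfied by x), then m ≥ |f^{-1}(1)| / (n/d + 1)^d. -/

import Mathlib

/-- A literal is a pair (variable, required value); an assignment `x` satisfies a
clause (a finite set of literals, interpreted as their disjunction) if some literal
of the clause gets its required value. -/
def ClauseSat {n : ℕ} (C : Finset (Fin n × ZMod 2)) (x : Fin n → ZMod 2) : Prop :=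
  ∃ l ∈ C, x l.1 = l.2

/-- The set of satisfying assignments of a CNF formula (a finite list of clauses,
interpreted as their conjunction). -/
def SatAssignments {n : ℕ} (φ : List (Finset (Fin n × ZMod 2))) :
    Set (Fin n → ZMod 2) :=
  {x | ∀ C ∈ φ, ClauseSat C x}

/-- A `k`-CNF formula: every clause has at most `k` literals. -/
def IsKCnf {n : ℕ} (k : ℕ) (φ : List (Finset (Fin n × ZMod 2))) : Prop :=
  ∀ C ∈ φ, C.card ≤ k

/-- `f` is an affine disperser for dimension `d` : `f` is non-constant on every
affine subspace of `𝔽₂ⁿ` of dimension `d`. -/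
def AffineDisperser {n : ℕ} (d : ℕ) (f : (Fin n → ZMod 2) → Bool) : Prop :=
  ∀ (W : Submodule (ZMod 2) (Fin n → ZMod 2)) (c : Fin n → ZMod 2),
    Module.finrank (ZMod 2) W = d →
    ∃ u ∈ W, ∃ v ∈ W, f (c + u) ≠ f (c + v)

namespace Stmt14


abbrev V (n : ℕ) := Fin n → ZMod 2
def maj (a b c : ZMod 2) : ZMod 2 := a*b + b*c + a*c
def med {n : ℕ} (x y z : V n) : V n := fun i => maj (x i) (y i) (z i)
def MajClosed {n : ℕ} (A : Finset (V n)) : Prop :=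
  ∀ x ∈ A, ∀ y ∈ A, ∀ z ∈ A, med x y z ∈ A
lemma maj_aab (a b : ZMod 2) : maj a a b = a := by revert a b; decide
lemma maj_aba (a b : ZMod 2) : maj a b a = a := by revert a b; decide
lemma maj_abb (a b : ZMod 2) : maj a b b = b := by revert a b; decide
lemma maj_add (a b c t : ZMod 2) : maj (a+t) (b+t) (c+t) = maj a b c + t := by
  revert a b c t; decide
lemma med_add {n : ℕ} (x y z t : V n) : med (x+t) (y+t) (z+t) = med x y z + t := by
  funext i; simp only [med, Pi.add_apply]; exact maj_add _ _ _ _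
lemma zmod2_ne_iff {a b : ZMod 2} : a ≠ b ↔ a = b + 1 := by revert a b; decide

def indic {n : ℕ} (K : Finset (Fin n)) : V n := fun b => if b ∈ K then 1 else 0

def linkSet {n : ℕ} (A : Finset (V n)) (u0 : Fin n) : Finset (Fin n) :=
  Finset.univ.filter (fun b => ∃ c : ZMod 2, ∀ x ∈ A, x b = x u0 + c)

lemma u0_mem_linkSet {n : ℕ} (A : Finset (V n)) (u0 : Fin n) : u0 ∈ linkSet A u0 := by
  simp only [linkSet, Finset.mem_filter, Finset.mem_univ, true_and]
  exact ⟨0, fun x _ => by simp⟩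

lemma exists_flip {n : ℕ} (A : Finset (V n)) (hmaj : MajClosed A) (u0 : Fin n)
    {k : ℕ} (w : Fin k → Fin n) (τ : Fin k → ZMod 2)
    (h0 : ∃ x ∈ A, x u0 = 0 ∧ ∀ j, x (w j) = τ j)
    (h1 : ∃ x ∈ A, x u0 = 1 ∧ ∀ j, x (w j) = τ j) :
    ∃ p ∈ A, p u0 = 0 ∧ (∀ j, p (w j) = τ j) ∧ p + indic (linkSet A u0) ∈ A := by
  classical
  set P : Finset (V n × V n) := (A ×ˢ A).filter
    (fun pq => pq.1 u0 = 0 ∧ pq.2 u0 = 1 ∧ (∀ j, pq.1 (w j) = τ j) ∧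
      (∀ j, pq.2 (w j) = τ j)) with hP
  have hPne : P.Nonempty := by
    obtain ⟨x0, hx0, hx00, hx0τ⟩ := h0
    obtain ⟨x1, hx1, hx11, hx1τ⟩ := h1
    exact ⟨(x0, x1), by
      simp only [hP, Finset.mem_filter, Finset.mem_product]
      exact ⟨⟨hx0, hx1⟩, hx00, hx11, hx0τ, hx1τ⟩⟩
  obtain ⟨pq, hpqP, hmin⟩ := Finset.exists_min_image P
    (fun pq => (Finset.univ.filter (fun b => pq.1 b ≠ pq.2 b)).card) hPne
  obtain ⟨p, q⟩ := pq
  simp only [hP, Finset.mem_filter, Finset.mem_product] at hpqP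
  obtain ⟨⟨hp, hq⟩, hp0, hq1, hpτ, hqτ⟩ := hpqP
  -- outside the link class, p and q agree
  have hclaim : ∀ b, b ∉ linkSet A u0 → p b = q b := by
    intro b hb
    by_contra hne
    have hqb : q b = p b + 1 := by
      have := zmod2_ne_iff.mp (Ne.symm hne); simpa using this
    simp only [linkSet, Finset.mem_filter, Finset.mem_univ, true_and] at hb
    push_neg at hb
    obtain ⟨z, hz, hzb⟩ := hb (p b)
    have hbD : b ∈ Finset.univ.filter (fun b => p b ≠ q b) := by
      simp [hne]
    rcases (show z u0 = 0 ∨ z u0 = 1 by revert hz; intro _; exact (by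
      rcases (show ∀ a : ZMod 2, a = 0 ∨ a = 1 by decide) (z u0) with h | h
      · exact Or.inl h
      · exact Or.inr h)) with hzu | hzu
    · -- z matches q at b; improve p
      have hzb' : z b = q b := by
        rw [hzu] at hzb; rw [hqb]
        have := zmod2_ne_iff.mp (by simpa using hzb)
        simpa using this
      set p' := med p q z with hp'
      have hp'A : p' ∈ A := hmaj p hp q hq z hz
      have hp'u0 : p' u0 = 0 := by
        simp only [hp', med, hp0, hq1, hzu]; decide
      have hp'τ : ∀ j, p' (w j) = τ j := by
        intro j; simp only [hp', med, hpτ j, hqτ j, maj_aab]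
      have hD' : Finset.univ.filter (fun b' => p' b' ≠ q b') ⊂
          Finset.univ.filter (fun b' => p b' ≠ q b') := by
        constructor
        · intro b' hb'
          simp only [Finset.mem_filter, Finset.mem_univ, true_and] at hb' ⊢
          by_contra hpq
          apply hb'
          simp only [hp', med, hpq, maj_aab]
        · intro hsub
          have hbmem := hsub hbD
          simp only [Finset.mem_filter, Finset.mem_univ, true_and] at hbmem
          apply hbmem
          simp only [hp', med, hzb', maj_abb]
      have := hmin (p', q) (by
        simp only [hP, Finset.mem_filter, Finset.mem_product]
        exact ⟨⟨hp'A, hq⟩, hp'u0, hq1, hp'τ, hqτ⟩)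
      simp only at this
      exact absurd this (not_le.mpr (Finset.card_lt_card hD'))
    · -- z matches p at b; improve q
      have hzb' : z b = p b := by
        rw [hzu] at hzb
        rcases (show ∀ a c : ZMod 2, a ≠ 1 + c → a = c by decide) (z b) (p b) hzb with h
        exact h
      set q' := med p q z with hq'
      have hq'A : q' ∈ A := hmaj p hp q hq z hz
      have hq'u0 : q' u0 = 1 := by
        simp only [hq', med, hp0, hq1, hzu]; decide
      have hq'τ : ∀ j, q' (w j) = τ j := by
        intro j; simp only [hq', med, hpτ j, hqτ j, maj_aab]
      have hD' : Finset.univ.filter (fun b' => p b' ≠ q' b') ⊂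
          Finset.univ.filter (fun b' => p b' ≠ q b') := by
        constructor
        · intro b' hb'
          simp only [Finset.mem_filter, Finset.mem_univ, true_and] at hb' ⊢
          by_contra hpq
          apply hb'
          simp only [hq', med, hpq, maj_aab]
        · intro hsub
          have hbmem := hsub hbD
          simp only [Finset.mem_filter, Finset.mem_univ, true_and] at hbmem
          apply hbmem
          simp only [hq', med, hzb', maj_aba]
      have := hmin (p, q') (by
        simp only [hP, Finset.mem_filter, Finset.mem_product]
        exact ⟨⟨hp, hq'A⟩, hp0, hq'u0, hpτ, hq'τ⟩)
      simp only at this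
      exact absurd this (not_le.mpr (Finset.card_lt_card hD'))
  have hqeq : q = p + indic (linkSet A u0) := by
    funext b
    by_cases hb : b ∈ linkSet A u0
    · have hb2 := hb
      simp only [linkSet, Finset.mem_filter, Finset.mem_univ, true_and] at hb2
      obtain ⟨c, hc⟩ := hb2
      have h1' := hc p hp
      have h2' := hc q hq
      rw [hp0] at h1'; rw [hq1] at h2'
      simp only [Pi.add_apply, indic, if_pos hb, h1', h2']
      ring
    · have := hclaim b hb
      simp only [Pi.add_apply, indic, if_neg hb, add_zero]
      exact this.symm
  exact ⟨p, hp, hp0, hpτ, by rw [← hqeq]; exact hq⟩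

theorem thmC {n : ℕ} : ∀ (k : ℕ) (A : Finset (V n)), MajClosed A → ∀ (u : Fin k → Fin n),
    (∀ τ : Fin k → ZMod 2, ∃ x ∈ A, ∀ j, x (u j) = τ j) →
    ∃ (x : V n) (v : Fin k → V n),
      (∀ j, v j (u j) = 1) ∧ (∀ i j, i ≠ j → v j (u i) = 0) ∧
      (∀ b, (∀ y ∈ A, ∀ z ∈ A, y b = z b) → ∀ j, v j b = 0) ∧
      (∀ ε : Fin k → ZMod 2, x + ∑ j, ε j • v j ∈ A) := by
  intro k
  induction k with
  | zero =>
    intro A hmaj u hshat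
    obtain ⟨x, hx, -⟩ := hshat (fun _ => 0)
    refine ⟨x, (fun j => j.elim0), ?_, ?_, ?_, ?_⟩
    · intro j; exact j.elim0
    · intro i; exact i.elim0
    · intro b _ j; exact j.elim0
    · intro ε; simpa using hx
  | succ k IH =>
    intro A hmaj u hshat
    set u0 := u 0 with hu0
    set K := linkSet A u0 with hK
    set C := A.filter (fun x => x u0 = 0 ∧ x + indic K ∈ A) with hC
    have hCsub : C ⊆ A := Finset.filter_subset _ _
    have hCmem : ∀ x, x ∈ C ↔ (x ∈ A ∧ x u0 = 0 ∧ x + indic K ∈ A) := by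
      intro x; simp [hC, Finset.mem_filter]
    have hCmaj : MajClosed C := by
      intro x hx y hy z hz
      rw [hCmem] at hx hy hz ⊢
      obtain ⟨hxA, hx0, hxf⟩ := hx
      obtain ⟨hyA, hy0, hyf⟩ := hy
      obtain ⟨hzA, hz0, hzf⟩ := hz
      refine ⟨hmaj x hxA y hyA z hzA, ?_, ?_⟩
      · show maj (x u0) (y u0) (z u0) = 0
        rw [hx0, hy0, hz0]; decide
      · rw [← med_add]; exact hmaj _ hxf _ hyf _ hzf
    have hCshat : ∀ τ' : Fin k → ZMod 2, ∃ x ∈ C, ∀ j, x (u j.succ) = τ' j := by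
      intro τ'
      obtain ⟨p, hp, hp0, hpτ, hpflip⟩ := exists_flip A hmaj u0 (fun j => u j.succ) τ'
        (by
          obtain ⟨x, hx, hxτ⟩ := hshat (Fin.cons 0 τ')
          refine ⟨x, hx, ?_, fun j => ?_⟩
          · simpa using hxτ 0
          · simpa using hxτ j.succ)
        (by
          obtain ⟨x, hx, hxτ⟩ := hshat (Fin.cons 1 τ')
          refine ⟨x, hx, ?_, fun j => ?_⟩
          · simpa using hxτ 0
          · simpa using hxτ j.succ)
      exact ⟨p, (hCmem p).mpr ⟨hp, hp0, hpflip⟩, hpτ⟩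
    obtain ⟨x, v', hv1, hv2, hv3, hv4⟩ := IH C hCmaj (fun j => u j.succ) hCshat
    have hKact : ∀ b, (∃ c : ZMod 2, ∀ y ∈ A, y b = y u0 + c) →
        (∃ y ∈ A, y (u0) = 0) → (∃ y ∈ A, y u0 = 1) → b ∈ K := by
      intro b hb _ _
      simp only [hK, linkSet, Finset.mem_filter, Finset.mem_univ, true_and]
      exact hb
    refine ⟨x, Fin.cons (indic K) v', ?_, ?_, ?_, ?_⟩
    · -- diagonal = 1
      intro j
      refine Fin.cases ?_ ?_ j
      · simp only [Fin.cons_zero]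
        have : u 0 ∈ K := u0_mem_linkSet A u0
        simp [indic, this]
      · intro i
        simp only [Fin.cons_succ]
        exact hv1 i
    · -- off-diagonal = 0
      intro i j
      revert i
      refine Fin.cases ?_ ?_ j
      · -- j = 0 : v 0 = indic K, need u i ∉ K for i ≠ 0
        intro i hi0
        simp only [Fin.cons_zero]
        obtain ⟨i', rfl⟩ := Fin.exists_succ_eq.mpr hi0
        have hnotK : u i'.succ ∉ K := by
          intro hmem
          simp only [hK, linkSet, Finset.mem_filter, Finset.mem_univ, true_and] at hmem
          obtain ⟨c, hc⟩ := hmem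
          obtain ⟨y, hy, hyτ⟩ := hshat (fun l => if l = 0 then 0 else c + 1)
          have h1 : y (u i'.succ) = c + 1 := by
            have := hyτ i'.succ
            rw [if_neg (by exact Fin.succ_ne_zero i')] at this
            exact this
          have h2 : y u0 = 0 := by
            have := hyτ 0
            rw [if_pos rfl] at this
            exact this
          have := hc y hy
          rw [h1, h2] at this
          simp at this
        simp [indic, hnotK]
      · intro j' i hij
        simp only [Fin.cons_succ]
        revert hij
        refine Fin.cases ?_ ?_ i
        · -- i = 0 : u 0 is constant (= 0) on C
          intro _
          refine hv3 u0 ?_ j'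
          intro y hy z hz
          rw [hCmem] at hy hz
          rw [hy.2.1, hz.2.1]
        · intro i' hij'
          refine hv2 i' j' ?_
          intro h
          exact hij' (by rw [h])
    · -- constant coordinates
      intro b hconst
      intro j
      refine Fin.cases ?_ ?_ j
      · simp only [Fin.cons_zero]
        have hnotK : b ∉ K := by
          intro hmem
          simp only [hK, linkSet, Finset.mem_filter, Finset.mem_univ, true_and] at hmem
          obtain ⟨c, hc⟩ := hmem
          obtain ⟨y0, hy0, hy0τ⟩ := hshat (fun _ => 0)
          obtain ⟨y1, hy1, hy1τ⟩ := hshat (fun l => if l = 0 then 1 else 0)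
          have e0 := hc y0 hy0
          have e1 := hc y1 hy1
          rw [hy0τ 0] at e0
          have : y1 u0 = 1 := by have := hy1τ 0; rw [if_pos rfl] at this; exact this
          rw [this] at e1
          have := hconst y0 hy0 y1 hy1
          rw [e0, e1] at this
          simp at this
        simp [indic, hnotK]
      · intro j'
        simp only [Fin.cons_succ]
        refine hv3 b ?_ j'
        intro y hy z hz
        exact hconst y (hCsub hy) z (hCsub hz)
    · -- sums
      intro ε
      have hsum : ∑ j, ε j • (Fin.cons (indic K) v' : Fin (k+1) → V n) j
          = ε 0 • indic K + ∑ j : Fin k, ε j.succ • v' j := by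
        rw [Fin.sum_univ_succ]
        simp
      rw [hsum]
      have hy := hv4 (fun j => ε j.succ)
      rw [hCmem] at hy
      rcases (show ∀ a : ZMod 2, a = 0 ∨ a = 1 by decide) (ε 0) with h | h
      · rw [h]
        simpa using hy.1
      · rw [h, one_smul]
        have := hy.2.2
        have heq : x + (indic K + ∑ j : Fin k, ε j.succ • v' j)
            = (x + ∑ j : Fin k, ε j.succ • v' j) + indic K := by ring
        rw [heq]
        exact this


lemma two_of_three {α : Type*} [DecidableEq α] {C : Finset α} (hC : C.card ≤ 2)
    {a b c : α} (ha : a ∈ C) (hb : b ∈ C) (hc : c ∈ C) :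
    a = b ∨ b = c ∨ a = c := by
  by_contra h
  push_neg at h
  obtain ⟨hab, hbc, hac⟩ := h
  have hsub : ({a, b, c} : Finset α) ⊆ C := by
    intro x hx; simp only [Finset.mem_insert, Finset.mem_singleton] at hx
    rcases hx with rfl | rfl | rfl <;> assumption
  have h3 : ({a, b, c} : Finset α).card = 3 := by
    rw [Finset.card_insert_of_notMem (by simp [hab, hac]),
        Finset.card_insert_of_notMem (by simp [hbc]), Finset.card_singleton]
  have := Finset.card_le_card hsub
  omega

lemma sat_med {n : ℕ} (φ : List (Finset (Fin n × ZMod 2))) (h2 : IsKCnf 2 φ)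
    {x y z : V n} (hx : x ∈ SatAssignments φ) (hy : y ∈ SatAssignments φ)
    (hz : z ∈ SatAssignments φ) : med x y z ∈ SatAssignments φ := by
  intro C hC
  obtain ⟨lx, hlx, hlxv⟩ := hx C hC
  obtain ⟨ly, hly, hlyv⟩ := hy C hC
  obtain ⟨lz, hlz, hlzv⟩ := hz C hC
  rcases two_of_three (h2 C hC) hlx hly hlz with h | h | h
  · subst h; exact ⟨lx, hlx, by simp [med, hlxv, hlyv, maj_aab]⟩
  · subst h; exact ⟨ly, hly, by simp [med, hlyv, hlzv, maj_abb]⟩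
  · subst h; exact ⟨lx, hlx, by simp [med, hlxv, hlzv, maj_aba]⟩
lemma maj_one {a b c : ZMod 2} (h : maj a b c = 1) :
    (a = 1 ∧ b = 1) ∨ (a = 1 ∧ c = 1) ∨ (b = 1 ∧ c = 1) := by revert a b c; decide
lemma maj_rot (a b c : ZMod 2) : maj a b c = maj b c a := by revert a b c; decide
lemma maj_swap (a b c : ZMod 2) : maj a b c = maj a c b := by revert a b c; decide
lemma med_rot {n : ℕ} (x y z : V n) : med x y z = med y z x := by
  funext j; exact maj_rot _ _ _
lemma med_swap {n : ℕ} (x y z : V n) : med x y z = med x z y := by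
  funext j; exact maj_swap _ _ _

def wt {n : ℕ} (x : V n) : ℕ := (Finset.univ.filter (fun b => x b = 1)).card

lemma flip_apply_same {n : ℕ} (i : Fin n) (x : V n) :
    (x + (Pi.single i 1 : V n)) i = x i + 1 := by
  simp [Pi.single_eq_same]

lemma flip_apply_ne {n : ℕ} (i : Fin n) (x : V n) {j : Fin n} (h : j ≠ i) :
    (x + (Pi.single i 1 : V n)) j = x j := by
  simp [Pi.single_eq_of_ne h]

lemma flip_flip {n : ℕ} (i : Fin n) (x : V n) :
    x + (Pi.single i 1 : V n) + (Pi.single i 1 : V n) = x := by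
  funext j
  by_cases h : j = i
  · subst h
    simp only [Pi.add_apply, Pi.single_eq_same]
    generalize x j = a; revert a; decide
  · simp [Pi.single_eq_of_ne h]

lemma wt_flip {n : ℕ} (i : Fin n) {x : V n} (hx : x i = 1) :
    wt (x + (Pi.single i 1 : V n)) + 1 = wt x := by
  have heq : Finset.univ.filter (fun b => (x + (Pi.single i 1 : V n)) b = 1)
      = (Finset.univ.filter (fun b => x b = 1)).erase i := by
    ext j
    simp only [Finset.mem_filter, Finset.mem_univ, true_and, Finset.mem_erase]
    constructor
    · intro hj
      by_cases h : j = i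
      · subst h
        rw [flip_apply_same, hx] at hj
        exact absurd hj (by decide)
      · rw [flip_apply_ne i x h] at hj
        exact ⟨h, hj⟩
    · intro ⟨h1, h2⟩
      rw [flip_apply_ne i x h1]
      exact h2
  unfold wt
  rw [heq, Finset.card_erase_of_mem (by simp [hx])]
  have hmem : i ∈ Finset.univ.filter (fun b => x b = 1) := by simp [hx]
  have hpos : 0 < (Finset.univ.filter (fun b => x b = 1)).card :=
    Finset.card_pos.mpr ⟨i, hmem⟩
  omega

section Shift
variable {n : ℕ} (A : Finset (V n)) (i : Fin n)

local notation "e" => (Pi.single i (1 : ZMod 2) : V n)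

def sig (x : V n) : V n :=
  if x i = 1 ∧ x + e ∉ A then x + e else x

def Sh : Finset (V n) := A.image (sig A i)

lemma sig_injOn : Set.InjOn (sig A i) A := by
  intro x hx y hy hxy
  unfold sig at hxy
  by_cases hx' : x i = 1 ∧ x + e ∉ A <;> by_cases hy' : y i = 1 ∧ y + e ∉ A
  · rw [if_pos hx', if_pos hy'] at hxy
    have := congrArg (· + e) hxy
    simpa [flip_flip] using this
  · rw [if_pos hx', if_neg hy'] at hxy
    exact absurd (hxy ▸ hy) hx'.2
  · rw [if_neg hx', if_pos hy'] at hxy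
    exact absurd (hxy.symm ▸ hx) hy'.2
  · rw [if_neg hx', if_neg hy'] at hxy; exact hxy

lemma Sh_card : (Sh A i).card = A.card :=
  Finset.card_image_of_injOn (sig_injOn A i)

lemma mem_Sh {y : V n} : y ∈ Sh A i ↔
    ((y i = 0 ∧ (y ∈ A ∨ y + e ∈ A)) ∨ (y i = 1 ∧ y ∈ A ∧ y + e ∈ A)) := by
  constructor
  · intro hy
    obtain ⟨x, hx, rfl⟩ := Finset.mem_image.mp hy
    unfold sig
    by_cases hx' : x i = 1 ∧ x + e ∉ A
    · rw [if_pos hx']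
      left
      refine ⟨by rw [flip_apply_same, hx'.1]; decide, Or.inr (by rw [flip_flip]; exact hx)⟩
    · rw [if_neg hx']
      push_neg at hx'
      rcases (show ∀ a : ZMod 2, a = 0 ∨ a = 1 by decide) (x i) with h | h
      · exact Or.inl ⟨h, Or.inl hx⟩
      · exact Or.inr ⟨h, hx, hx' h⟩
  · intro hy
    rcases hy with ⟨hy0, hyA | hyeA⟩ | ⟨hy1, hyA, hyeA⟩
    · refine Finset.mem_image.mpr ⟨y, hyA, ?_⟩
      unfold sig
      rw [if_neg (by rw [hy0]; simp)]
    · by_cases hyA : y ∈ A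
      · refine Finset.mem_image.mpr ⟨y, hyA, ?_⟩
        unfold sig
        rw [if_neg (by rw [hy0]; simp)]
      · refine Finset.mem_image.mpr ⟨y + e, hyeA, ?_⟩
        unfold sig
        rw [if_pos ⟨by rw [flip_apply_same, hy0]; decide, by rw [flip_flip]; exact hyA⟩,
          flip_flip]
    · refine Finset.mem_image.mpr ⟨y, hyA, ?_⟩
      unfold sig
      rw [if_neg (by intro h; exact h.2 hyeA)]

/-- lift: a representative in A agreeing off coordinate i -/
lemma Sh_lift {y : V n} (hy : y ∈ Sh A i) : ∃ x ∈ A, ∀ j, j ≠ i → x j = y j := by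
  rcases (mem_Sh A i).mp hy with ⟨_, hyA | hyeA⟩ | ⟨_, hyA, _⟩
  · exact ⟨y, hyA, fun j _ => rfl⟩
  · exact ⟨y + e, hyeA, fun j hj => flip_apply_ne i y hj⟩
  · exact ⟨y, hyA, fun j _ => rfl⟩

lemma Sh_majClosed (hmaj : MajClosed A) : MajClosed (Sh A i) := by
  have key : ∀ p q r : V n, p ∈ Sh A i → q ∈ Sh A i → r ∈ Sh A i →
      p i = 1 → q i = 1 → (med p q r ∈ A ∧ med p q r + e ∈ A) := by
    intro p q r hp hq hr hpi hqi
    obtain ⟨hpA, hpeA⟩ := ((mem_Sh A i).mp hp).resolve_left (by rw [hpi]; simp)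
      |>.2
    obtain ⟨hqA, hqeA⟩ := ((mem_Sh A i).mp hq).resolve_left (by rw [hqi]; simp) |>.2
    obtain ⟨r', hr'A, hr'⟩ := Sh_lift A i hr
    constructor
    · have heq : med p q r = med p q r' := by
        funext j
        show maj (p j) (q j) (r j) = maj (p j) (q j) (r' j)
        by_cases hj : j = i
        · rw [hj, hpi, hqi, maj_aab, maj_aab]
        · rw [hr' j hj]
      rw [heq]
      exact hmaj p hpA q hqA r' hr'A
    · have heq : med p q r + e = med (p + e) (q + e) r' := by
        funext j
        show maj (p j) (q j) (r j) + (e : V n) j = maj ((p+e) j) ((q+e) j) (r' j)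
        by_cases hj : j = i
        · rw [hj]
          rw [flip_apply_same i p, flip_apply_same i q,
              show (e : V n) i = 1 from Pi.single_eq_same i 1, hpi, hqi]
          generalize r i = a; generalize r' i = b; revert a b; decide
        · rw [flip_apply_ne i p hj, flip_apply_ne i q hj, hr' j hj,
              show (e : V n) j = 0 from Pi.single_eq_of_ne hj 1, add_zero]
      rw [heq]
      exact hmaj _ hpeA _ hqeA _ hr'A
  intro x hx y hy z hz
  rcases (show ∀ a : ZMod 2, a = 0 ∨ a = 1 by decide) (med x y z i) with hmi | hmi
  · -- med value 0 at i: enough to find a representative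
    obtain ⟨x', hx'A, hx'⟩ := Sh_lift A i hx
    obtain ⟨y', hy'A, hy'⟩ := Sh_lift A i hy
    obtain ⟨z', hz'A, hz'⟩ := Sh_lift A i hz
    have hm' : med x' y' z' ∈ A := hmaj _ hx'A _ hy'A _ hz'A
    have hagree : ∀ j, j ≠ i → med x' y' z' j = med x y z j := by
      intro j hj
      show maj (x' j) (y' j) (z' j) = maj (x j) (y j) (z j)
      rw [hx' j hj, hy' j hj, hz' j hj]
    rw [mem_Sh]
    left
    refine ⟨hmi, ?_⟩
    rcases (show ∀ a : ZMod 2, a = 0 ∨ a = 1 by decide) (med x' y' z' i) with hmi' | hmi'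
    · left
      have heq : med x' y' z' = med x y z := by
        funext j
        by_cases hj : j = i
        · rw [hj, hmi', hmi]
        · exact hagree j hj
      rwa [heq] at hm'
    · right
      have heq : med x' y' z' = med x y z + e := by
        funext j
        by_cases hj : j = i
        · rw [hj, hmi']
          show (1 : ZMod 2) = med x y z i + (e : V n) i
          rw [hmi, show (e : V n) i = 1 from Pi.single_eq_same i 1]; decide
        · show med x' y' z' j = med x y z j + (e : V n) j
          rw [hagree j hj]
          rw [show (e : V n) j = 0 from Pi.single_eq_of_ne hj 1, add_zero]
      rwa [heq] at hm'
  · -- med value 1 at i: two of the three have value 1 at i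
    rcases maj_one hmi with ⟨h1, h2⟩ | ⟨h1, h2⟩ | ⟨h1, h2⟩
    · have := key x y z hx hy hz h1 h2
      rw [mem_Sh]
      exact Or.inr ⟨hmi, this⟩
    · have := key x z y hx hz hy h1 h2
      rw [mem_Sh]
      rw [show med x y z = med x z y from med_swap x y z]
      refine Or.inr ⟨?_, this⟩
      rw [← med_swap]; exact hmi
    · have := key y z x hy hz hx h1 h2
      rw [mem_Sh]
      rw [show med x y z = med y z x from med_rot x y z]
      refine Or.inr ⟨?_, this⟩
      rw [← med_rot]; exact hmi

lemma Sh_shatters {k : ℕ} (u : Fin k → Fin n)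
    (h : ∀ τ : Fin k → ZMod 2, ∃ y ∈ Sh A i, ∀ j, y (u j) = τ j) :
    ∀ τ : Fin k → ZMod 2, ∃ x ∈ A, ∀ j, x (u j) = τ j := by
  intro τ
  by_cases hex : ∃ j0, u j0 = i ∧ τ j0 = 0
  · obtain ⟨j0, hj0, hτ0⟩ := hex
    by_cases hex1 : ∃ j1, u j1 = i ∧ τ j1 = 1
    · obtain ⟨j1, hj1, hτ1⟩ := hex1
      obtain ⟨y, _, hyτ⟩ := h τ
      exfalso
      have h0 := hyτ j0
      have h1 := hyτ j1
      rw [hj0] at h0; rw [hj1] at h1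
      rw [h0, hτ0] at h1
      rw [hτ1] at h1
      exact absurd h1 (by decide)
    · push_neg at hex1
      obtain ⟨y, hy, hyτ⟩ := h (fun j => if u j = i then 1 else τ j)
      have hyi : y i = 1 := by
        have h0 := hyτ j0
        rw [if_pos hj0] at h0
        rw [hj0] at h0
        exact h0
      obtain ⟨_, hyA, hyeA⟩ := ((mem_Sh A i).mp hy).resolve_left (by rw [hyi]; simp)
      refine ⟨y + e, hyeA, fun j => ?_⟩
      by_cases hj : u j = i
      · rw [hj, flip_apply_same, hyi]
        have := hex1 j hj
        rcases (show ∀ a : ZMod 2, a ≠ 1 → a = 0 by decide) (τ j) this with h0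
        rw [h0]; decide
      · rw [flip_apply_ne i y hj]
        have h2 := hyτ j
        rwa [if_neg hj] at h2
  · push_neg at hex
    obtain ⟨y, hy, hyτ⟩ := h τ
    by_cases hyi : ∃ j, u j = i
    · obtain ⟨j1, hj1⟩ := hyi
      have : τ j1 = 1 := by
        rcases (show ∀ a : ZMod 2, a = 0 ∨ a = 1 by decide) (τ j1) with h0 | h1
        · exact absurd h0 (hex j1 hj1)
        · exact h1
      have hyi1 : y i = 1 := by rw [← hj1, hyτ j1, this]
      obtain ⟨_, hyA, _⟩ := ((mem_Sh A i).mp hy).resolve_left (by rw [hyi1]; simp)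
      exact ⟨y, hyA, hyτ⟩
    · push_neg at hyi
      obtain ⟨x, hxA, hx⟩ := Sh_lift A i hy
      exact ⟨x, hxA, fun j => by rw [hx (u j) (hyi j)]; exact hyτ j⟩

end Shift

lemma exists_down {n : ℕ} : ∀ (N : ℕ) (A : Finset (V n)), (∑ x ∈ A, wt x) ≤ N →
    MajClosed A → ∃ B : Finset (V n), B.card = A.card ∧ MajClosed B ∧
    (∀ x ∈ B, ∀ i, x i = 1 → x + Pi.single i 1 ∈ B) ∧
    (∀ k (u : Fin k → Fin n), (∀ τ : Fin k → ZMod 2, ∃ y ∈ B, ∀ j, y (u j) = τ j) →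
      (∀ τ : Fin k → ZMod 2, ∃ x ∈ A, ∀ j, x (u j) = τ j)) := by
  intro N
  induction N with
  | zero =>
    intro A hΦ hmaj
    refine ⟨A, rfl, hmaj, ?_, fun k u h => h⟩
    intro x hx i hxi
    exfalso
    have h1 : 1 ≤ wt x := by
      unfold wt
      refine Finset.card_pos.mpr ⟨i, by simp [hxi]⟩
    have : 1 ≤ ∑ x ∈ A, wt x := le_trans h1 (Finset.single_le_sum (fun _ _ => Nat.zero_le _) hx)
    omega
  | succ N IH =>
    intro A hΦ hmaj
    by_cases hd : ∃ i, ∃ x ∈ A, x i = 1 ∧ x + Pi.single i 1 ∉ A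
    · obtain ⟨i, x0, hx0, hx0i, hx0e⟩ := hd
      have hΦ' : (∑ x ∈ Sh A i, wt x) < ∑ x ∈ A, wt x := by
        rw [Sh, Finset.sum_image (fun x hx y hy h => sig_injOn A i hx hy h)]
        refine Finset.sum_lt_sum (fun x hx => ?_) ⟨x0, hx0, ?_⟩
        · unfold sig
          by_cases hc : x i = 1 ∧ x + Pi.single i 1 ∉ A
          · rw [if_pos hc]
            have := wt_flip i hc.1
            omega
          · rw [if_neg hc]
        · unfold sig
          rw [if_pos ⟨hx0i, hx0e⟩]
          have := wt_flip i hx0i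
          omega
      obtain ⟨B, hB1, hB2, hB3, hB4⟩ := IH (Sh A i) (by omega) (Sh_majClosed A i hmaj)
      refine ⟨B, by rw [hB1, Sh_card], hB2, hB3, ?_⟩
      intro k u h
      exact Sh_shatters A i u (hB4 k u h)
    · push_neg at hd
      exact ⟨A, rfl, hmaj, fun x hx i hxi => hd i x hx hxi, fun k u h => h⟩



/-- balanced-partition product bound -/
def g (N t : ℕ) : ℕ := ∏ j ∈ Finset.range t, ((N + j)/t + 1)

lemma g_mono {N N' : ℕ} (t : ℕ) (h : N ≤ N') : g N t ≤ g N' t := by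
  unfold g
  apply Finset.prod_le_prod'
  intro j _
  have := Nat.div_le_div_right (c := t) (Nat.add_le_add_right h j)
  omega

lemma g_zero (t : ℕ) : g 0 t = 1 := by
  unfold g
  have h : ∀ j ∈ Finset.range t, ((0 + j)/t + 1) = 1 := by
    intro j hj
    rw [Nat.zero_add, Nat.div_eq_of_lt (Finset.mem_range.mp hj)]
  rw [Finset.prod_congr rfl h, Finset.prod_const_one]

lemma g_one (N : ℕ) : g N 1 = N + 1 := by
  unfold g
  rw [Finset.prod_range_one, Nat.add_zero, Nat.div_one]

lemma g_zero_t (N : ℕ) : g N 0 = 1 := by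
  unfold g; rw [Finset.range_zero, Finset.prod_empty]

lemma g_eval (q r t : ℕ) (hr : r < t) :
    g (q*t + r) t = (q+2)^r * (q+1)^(t-r) := by
  have ht : 0 < t := lt_of_le_of_lt (Nat.zero_le r) hr
  unfold g
  have hcong : ∀ j ∈ Finset.range t, ((q*t + r + j)/t + 1)
      = if j < t - r then q+1 else q+2 := by
    intro j hj
    have hjt := Finset.mem_range.mp hj
    rw [show q*t + r + j = r + j + t*q by ring, Nat.add_mul_div_left _ _ ht]
    by_cases hc : j < t - r
    · rw [if_pos hc, Nat.div_eq_of_lt (by omega)]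
      omega
    · rw [if_neg hc]
      have h1 : (r+j)/t = 1 := Nat.div_eq_of_lt_le (by omega) (by omega)
      omega
  rw [Finset.prod_congr rfl hcong]
  set s := t - r with hs
  rw [show t = s + r by omega, Finset.prod_range_add]
  have h1 : ∀ j ∈ Finset.range s, (if j < s then q+1 else q+2) = q+1 := by
    intro j hj; rw [if_pos (Finset.mem_range.mp hj)]
  have h2 : ∀ j ∈ Finset.range r, (if s + j < s then q+1 else q+2) = q+2 := by
    intro j _; rw [if_neg (by omega)]
  rw [Finset.prod_congr rfl h1, Finset.prod_congr rfl h2,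
    Finset.prod_const, Finset.prod_const, Finset.card_range, Finset.card_range]
  ring

lemma g_key {N t k : ℕ} (ht : 1 ≤ t) (hk : 1 ≤ k) (hkN : k ≤ N) (hNtk : N ≤ t * k) :
    g (N-1) t + g (N-k) (t-1) ≤ g N t := by
  have hN1 : 1 ≤ N := le_trans hk hkN
  by_cases ht1 : t = 1
  · subst ht1
    have hkN' : k = N := by omega
    subst hkN'
    simp only [g_one, Nat.sub_self, g_zero_t]
    omega
  have ht2 : 2 ≤ t := by omega
  set q := N / t with hq
  set r := N % t with hrdef
  have hqr : q * t + r = N := by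
    rw [hq, hrdef, mul_comm]; exact Nat.div_add_mod N t
  have hr : r < t := Nat.mod_lt _ (by omega)
  by_cases hr0 : r = 0
  · -- N = q*t
    have hNq : N = q * t := by omega
    have hq1 : 1 ≤ q := by
      rcases Nat.eq_zero_or_pos q with h | h
      · rw [h, zero_mul] at hNq; omega
      · exact h
    have hkq : q ≤ k := by
      refine Nat.le_of_mul_le_mul_left ?_ (show 0 < t by omega)
      calc t * q = q * t := mul_comm t q
        _ ≤ t * k := by omega
    have h2le : g (N-k) (t-1) ≤ g (N-q) (t-1) := g_mono _ (by omega)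
    have ee1 : (q-1+1)*t = (q-1)*t + t := by ring
    rw [show q-1+1 = q by omega] at ee1
    have ee2 : q*(t-1+1) = q*(t-1) + q := by ring
    rw [show t-1+1 = t by omega] at ee2
    have e1 : N - 1 = (q-1)*t + (t-1) := by omega
    have e2 : N - q = q*(t-1) + 0 := by omega
    have g1 : g (N-1) t = (q+1)^(t-1) * q^1 := by
      rw [e1, g_eval (q-1) (t-1) t (by omega)]
      congr 2 <;> omega
    have g2 : g (N-q) (t-1) = (q+1)^(t-1) := by
      rw [e2, g_eval q 0 (t-1) (by omega)]
      simp [show t-1-0 = t-1 by omega]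
    have g3 : g N t = (q+1)^t := by
      rw [show N = q*t + 0 by omega, g_eval q 0 t (by omega)]
      simp
    rw [g1, g3]
    refine le_trans (Nat.add_le_add_left h2le _) ?_
    rw [g2]
    refine le_of_eq ?_
    calc (q+1)^(t-1) * q^1 + (q+1)^(t-1)
        = (q+1)^(t-1) * (q+1) := by ring
      _ = (q+1)^t := by rw [← pow_succ]; congr 1; omega
  · -- r ≥ 1
    have hrpos : 1 ≤ r := by omega
    have hkq : q + 1 ≤ k := by
      have hlt : t * q < t * k := by
        calc t * q = q * t := mul_comm t q
          _ < t * k := by omega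
      have := Nat.lt_of_mul_lt_mul_left hlt
      omega
    have h2le : g (N-k) (t-1) ≤ g (N-(q+1)) (t-1) := g_mono _ (by omega)
    have ee2 : q*(t-1+1) = q*(t-1) + q := by ring
    rw [show t-1+1 = t by omega] at ee2
    have e1 : N - 1 = q*t + (r-1) := by omega
    have e2 : N - (q+1) = q*(t-1) + (r-1) := by omega
    have g1 : g (N-1) t = (q+2)^(r-1) * (q+1)^(t-r+1) := by
      rw [e1, g_eval q (r-1) t (by omega)]
      congr 2
      omega
    have g2 : g (N-(q+1)) (t-1) = (q+2)^(r-1) * (q+1)^(t-r) := by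
      rw [e2, g_eval q (r-1) (t-1) (by omega)]
      congr 2
      omega
    have g3 : g N t = (q+2)^r * (q+1)^(t-r) := by
      rw [← hqr, g_eval q r t hr]
    rw [g1, g3]
    refine le_trans (Nat.add_le_add_left h2le _) ?_
    rw [g2]
    have hp1 : (q+1)^(t-r+1) = (q+1)^(t-r) * (q+1) := pow_succ _ _
    have hp2 : (q+2)^r = (q+2)^(r-1) * (q+2) := by
      rw [← pow_succ]; congr 1; omega
    rw [hp1, hp2]
    exact le_of_eq (by ring)

section Graph
variable {n : ℕ} (E : Fin n → Fin n → Prop) [DecidableRel E]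

def Indep (I : Finset (Fin n)) : Prop := ∀ a ∈ I, ∀ b ∈ I, a ≠ b → ¬ E a b

instance : DecidablePred (Indep E) := fun I => by unfold Indep; infer_instance

def indFam (s : Finset (Fin n)) : Finset (Finset (Fin n)) :=
  s.powerset.filter (Indep E)

def alphaG (s : Finset (Fin n)) : ℕ := (indFam E s).sup Finset.card

lemma indep_mono {I J : Finset (Fin n)} (h : I ⊆ J) (hJ : Indep E J) : Indep E I :=
  fun a ha b hb hab => hJ a (h ha) b (h hb) hab

lemma empty_mem_indFam (s : Finset (Fin n)) : ∅ ∈ indFam E s := by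
  unfold indFam
  simp only [Finset.mem_filter, Finset.mem_powerset]
  exact ⟨Finset.empty_subset s, fun a ha => absurd ha (Finset.notMem_empty a)⟩

lemma indFam_mono {s s' : Finset (Fin n)} (h : s ⊆ s') : indFam E s ⊆ indFam E s' := by
  unfold indFam
  intro I hI
  simp only [Finset.mem_filter, Finset.mem_powerset] at hI ⊢
  exact ⟨hI.1.trans h, hI.2⟩

lemma alphaG_mono {s s' : Finset (Fin n)} (h : s ⊆ s') : alphaG E s ≤ alphaG E s' :=
  Finset.sup_mono (indFam_mono E h)

lemma indFam_card_le (hsym : ∀ a b, E a b → E b a) (hirr : ∀ a, ¬ E a a) :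
    ∀ (M : ℕ) (s : Finset (Fin n)), s.card ≤ M → ∀ t, alphaG E s ≤ t →
      (indFam E s).card ≤ g s.card t := by
  intro M
  induction M with
  | zero =>
    intro s hs t _
    have hse : s = ∅ := Finset.card_eq_zero.mp (by omega)
    subst hse
    have : indFam E (∅ : Finset (Fin n)) = {∅} := by
      apply Finset.Subset.antisymm
      · intro I hI
        simp only [indFam, Finset.mem_filter, Finset.mem_powerset,
          Finset.subset_empty] at hI
        simp [hI.1]
      · intro I hI
        simp only [Finset.mem_singleton] at hI
        subst hI
        exact empty_mem_indFam E ∅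
    rw [this, Finset.card_singleton, Finset.card_empty, g_zero]
  | succ M IH =>
    intro s hs t ht
    rcases Finset.eq_empty_or_nonempty s with rfl | hne
    · have : indFam E (∅ : Finset (Fin n)) = {∅} := by
        apply Finset.Subset.antisymm
        · intro I hI
          simp only [indFam, Finset.mem_filter, Finset.mem_powerset,
            Finset.subset_empty] at hI
          simp [hI.1]
        · intro I hI
          simp only [Finset.mem_singleton] at hI
          subst hI
          exact empty_mem_indFam E ∅
      rw [this, Finset.card_singleton, Finset.card_empty, g_zero]
    -- pick a vertex of maximum degree
    obtain ⟨v, hv, hvmax⟩ := Finset.exists_max_image s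
      (fun v => ((s.erase v).filter (fun b => E v b)).card) hne
    set dv := ((s.erase v).filter (fun b => E v b)).card with hdv
    set k := dv + 1 with hkdef
    set sNv := (s.erase v).filter (fun b => ¬ E v b) with hsNv
    -- branching
    have hbranch : (indFam E s).card ≤
        (indFam E (s.erase v)).card + (indFam E sNv).card := by
      have hsubset : indFam E s ⊆
          (indFam E (s.erase v)) ∪ ((indFam E sNv).image (insert v)) := by
        intro I hI
        simp only [indFam, Finset.mem_filter, Finset.mem_powerset] at hI
        obtain ⟨hIs, hInd⟩ := hI
        by_cases hvI : v ∈ I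
        · apply Finset.mem_union_right
          refine Finset.mem_image.mpr ⟨I.erase v, ?_, Finset.insert_erase hvI⟩
          simp only [indFam, Finset.mem_filter, Finset.mem_powerset]
          constructor
          · intro b hb
            obtain ⟨hbv, hbI⟩ := Finset.mem_erase.mp hb
            rw [hsNv]
            simp only [Finset.mem_filter, Finset.mem_erase]
            exact ⟨⟨hbv, hIs hbI⟩, fun hE => hInd v hvI b hbI (Ne.symm hbv) hE⟩
          · exact indep_mono E (Finset.erase_subset v I) hInd
        · apply Finset.mem_union_left
          simp only [indFam, Finset.mem_filter, Finset.mem_powerset]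
          refine ⟨fun b hb => Finset.mem_erase.mpr ⟨?_, hIs hb⟩, hInd⟩
          intro hbv; subst hbv; exact hvI hb
      calc (indFam E s).card
          ≤ ((indFam E (s.erase v)) ∪ ((indFam E sNv).image (insert v))).card :=
            Finset.card_le_card hsubset
        _ ≤ (indFam E (s.erase v)).card + ((indFam E sNv).image (insert v)).card :=
            Finset.card_union_le _ _
        _ ≤ (indFam E (s.erase v)).card + (indFam E sNv).card := by
            have := Finset.card_image_le (s := indFam E sNv) (f := insert v)
            omega
    -- alpha bounds
    have halpha1 : alphaG E (s.erase v) ≤ t :=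
      le_trans (alphaG_mono E (Finset.erase_subset v s)) ht
    have halpha2 : alphaG E sNv + 1 ≤ alphaG E s := by
      obtain ⟨I, hI, hIcard⟩ := Finset.exists_mem_eq_sup (indFam E sNv)
        ⟨∅, empty_mem_indFam E sNv⟩ Finset.card
      have hIsub : I ⊆ sNv := by
        have := hI
        simp only [indFam, Finset.mem_filter, Finset.mem_powerset] at this
        exact this.1
      have hInd : Indep E I := by
        have := hI
        simp only [indFam, Finset.mem_filter, Finset.mem_powerset] at this
        exact this.2
      have hvnotI : v ∉ I := by
        intro hvI
        have := hIsub hvI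
        rw [hsNv] at this
        simp only [Finset.mem_filter, Finset.mem_erase] at this
        exact this.1.1 rfl
      have hJ : insert v I ∈ indFam E s := by
        simp only [indFam, Finset.mem_filter, Finset.mem_powerset]
        constructor
        · intro b hb
          rcases Finset.mem_insert.mp hb with rfl | hbI
          · exact hv
          · have := hIsub hbI
            rw [hsNv] at this
            simp only [Finset.mem_filter, Finset.mem_erase] at this
            exact this.1.2
        · intro a ha b hb hab
          rcases Finset.mem_insert.mp ha with rfl | haI <;>
            rcases Finset.mem_insert.mp hb with h | hbI
          · exact absurd h.symm hab
          · have := hIsub hbI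
            rw [hsNv] at this
            simp only [Finset.mem_filter, Finset.mem_erase] at this
            exact this.2
          · subst h
            have := hIsub haI
            rw [hsNv] at this
            simp only [Finset.mem_filter, Finset.mem_erase] at this
            intro hE
            exact this.2 (hsym _ _ hE)
          · exact hInd a haI b hbI hab
      have := Finset.le_sup (f := Finset.card) hJ
      rw [Finset.card_insert_of_notMem hvnotI] at this
      unfold alphaG
      omega
    -- domination : s.card ≤ alphaG E s * k
    have hdom : s.card ≤ alphaG E s * k := by
      obtain ⟨Im, hIm, hImcard⟩ := Finset.exists_mem_eq_sup (indFam E s)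
        ⟨∅, empty_mem_indFam E s⟩ Finset.card
      have hImc : alphaG E s = Im.card := hImcard
      have hImsub : Im ⊆ s := by
        have := hIm
        simp only [indFam, Finset.mem_filter, Finset.mem_powerset] at this
        exact this.1
      have hImInd : Indep E Im := by
        have := hIm
        simp only [indFam, Finset.mem_filter, Finset.mem_powerset] at this
        exact this.2
      have hcover : s ⊆ Im.biUnion (fun b => insert b ((s.erase b).filter (fun w => E b w))) := by
        intro w hw
        by_cases hwI : w ∈ Im
        · exact Finset.mem_biUnion.mpr ⟨w, hwI, Finset.mem_insert_self w _⟩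
        · have hexists : ∃ b ∈ Im, E b w := by
            by_contra hcon
            push_neg at hcon
            have hJ : insert w Im ∈ indFam E s := by
              simp only [indFam, Finset.mem_filter, Finset.mem_powerset]
              constructor
              · intro b hb
                rcases Finset.mem_insert.mp hb with rfl | hbI
                · exact hw
                · exact hImsub hbI
              · intro a ha b hb hab
                rcases Finset.mem_insert.mp ha with rfl | haI <;>
                  rcases Finset.mem_insert.mp hb with h | hbI
                · exact absurd h.symm hab
                · intro hE
                  exact hcon b hbI (hsym _ _ hE)
                · subst h
                  exact hcon a haI
                · exact hImInd a haI b hbI hab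
            have hle := Finset.le_sup (f := Finset.card) hJ
            rw [Finset.card_insert_of_notMem hwI] at hle
            have : alphaG E s = (indFam E s).sup Finset.card := rfl
            omega
          obtain ⟨b, hbI, hbE⟩ := hexists
          refine Finset.mem_biUnion.mpr ⟨b, hbI, Finset.mem_insert.mpr (Or.inr ?_)⟩
          simp only [Finset.mem_filter, Finset.mem_erase]
          refine ⟨⟨?_, hw⟩, hbE⟩
          intro hwb; subst hwb; exact hwI hbI
      calc s.card ≤ (Im.biUnion (fun b => insert b ((s.erase b).filter (fun w => E b w)))).card :=
            Finset.card_le_card hcover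
        _ ≤ ∑ b ∈ Im, (insert b ((s.erase b).filter (fun w => E b w))).card :=
            Finset.card_biUnion_le
        _ ≤ ∑ b ∈ Im, k := by
            refine Finset.sum_le_sum ?_
            intro b hb
            calc (insert b ((s.erase b).filter (fun w => E b w))).card
                ≤ ((s.erase b).filter (fun w => E b w)).card + 1 :=
                  Finset.card_insert_le _ _
              _ ≤ dv + 1 := by
                  have := hvmax b (hImsub hb)
                  omega
        _ = Im.card * k := by rw [Finset.sum_const, smul_eq_mul]
        _ = alphaG E s * k := by rw [hImc]
    -- sizes
    have hcard_erase : (s.erase v).card = s.card - 1 := Finset.card_erase_of_mem hv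
    have hcard_sNv : sNv.card = s.card - k := by
      have hsplit := Finset.card_filter_add_card_filter_not
        (s := s.erase v) (p := fun b => E v b)
      rw [hsNv]
      omega
    have halph_pos : 1 ≤ alphaG E s := by
      obtain ⟨w, hw⟩ := hne
      have hJ : {w} ∈ indFam E s := by
        simp only [indFam, Finset.mem_filter, Finset.mem_powerset]
        refine ⟨Finset.singleton_subset_iff.mpr hw, ?_⟩
        intro a ha b hb hab
        simp only [Finset.mem_singleton] at ha hb
        subst ha; subst hb; exact absurd rfl hab
      have hls := Finset.le_sup (f := Finset.card) hJ
      have h1 : ({w} : Finset (Fin n)).card = 1 := Finset.card_singleton w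
      show 1 ≤ (indFam E s).sup Finset.card
      omega
    have ht1 : 1 ≤ t := le_trans halph_pos ht
    have hkcard : k ≤ s.card := by
      have : dv ≤ (s.erase v).card := Finset.card_le_card (Finset.filter_subset _ _)
      have hspos : 1 ≤ s.card := Finset.card_pos.mpr hne
      omega
    -- apply IH to both branches
    have hIH1 : (indFam E (s.erase v)).card ≤ g (s.card - 1) t := by
      have := IH (s.erase v) (by omega) t halpha1
      rwa [hcard_erase] at this
    have hIH2 : (indFam E sNv).card ≤ g (s.card - k) (t-1) := by
      have hsub : sNv ⊆ s.erase v := Finset.filter_subset _ _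
      have hcardle : sNv.card ≤ M := by
        have := Finset.card_le_card hsub
        omega
      have halph : alphaG E sNv ≤ t - 1 := by omega
      have := IH sNv hcardle (t-1) halph
      rwa [hcard_sNv] at this
    have hdom' : s.card ≤ t * k := by
      calc s.card ≤ alphaG E s * k := hdom
        _ ≤ t * k := Nat.mul_le_mul_right k ht
    calc (indFam E s).card ≤ g (s.card - 1) t + g (s.card - k) (t-1) := by omega
      _ ≤ g s.card t := g_key ht1 (by omega) hkcard hdom'

end Graph

lemma g_le_real (N t : ℕ) (ht : 1 ≤ t) : (g N t : ℝ) ≤ (1 + (N:ℝ)/t) ^ t := by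
  have htpos : (0:ℝ) < t := by exact_mod_cast ht
  set q := N / t with hq
  set r := N % t with hrdef
  have hqr : q * t + r = N := by rw [hq, hrdef, mul_comm]; exact Nat.div_add_mod N t
  have hr : r < t := Nat.mod_lt _ (by omega)
  rw [← hqr, g_eval q r t hr]
  set x : ℝ := (q:ℝ) + 2 with hx
  set y : ℝ := (q:ℝ) + 1 with hy
  set w1 : ℝ := (r:ℝ) / t with hw1
  set w2 : ℝ := ((t:ℝ) - r) / t with hw2
  have hxpos : (0:ℝ) ≤ x := by positivity
  have hypos : (0:ℝ) ≤ y := by positivity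
  have hw1n : 0 ≤ w1 := by positivity
  have hw2n : 0 ≤ w2 := by
    rw [hw2]
    have hrt : (r:ℝ) ≤ t := by exact_mod_cast hr.le
    apply div_nonneg (by linarith) (le_of_lt htpos)
  have hsum : w1 + w2 = 1 := by
    rw [hw1, hw2]
    field_simp
    ring
  have hAM := Real.geom_mean_le_arith_mean2_weighted hw1n hw2n hxpos hypos hsum
  have hval : w1 * x + w2 * y = 1 + ((q*t + r : ℕ):ℝ)/t := by
    rw [hw1, hw2, hx, hy]
    push_cast
    field_simp
    ring
  rw [hval] at hAM
  have hbase : (0:ℝ) ≤ x ^ w1 * y ^ w2 := by positivity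
  have hpow := pow_le_pow_left₀ hbase hAM t
  refine le_trans (le_of_eq ?_) hpow
  -- (q+2)^r * (q+1)^(t-r) = (x ^ w1 * y ^ w2)^t
  rw [mul_pow]
  have e1 : (x ^ w1) ^ (t:ℕ) = x ^ (r:ℕ) := by
    rw [← Real.rpow_natCast (x ^ w1) t, ← Real.rpow_mul hxpos]
    rw [show w1 * (t:ℝ) = (r:ℝ) by rw [hw1]; field_simp]
    rw [Real.rpow_natCast]
  have e2 : (y ^ w2) ^ (t:ℕ) = y ^ (t - r:ℕ) := by
    rw [← Real.rpow_natCast (y ^ w2) t, ← Real.rpow_mul hypos]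
    rw [show w2 * (t:ℝ) = ((t - r:ℕ):ℝ) by
      rw [hw2]
      rw [Nat.cast_sub hr.le]
      field_simp]
    rw [Real.rpow_natCast]
  rw [e1, e2]
  push_cast
  ring


section Assembly
variable {n : ℕ}

def suppF (x : V n) : Finset (Fin n) := Finset.univ.filter (fun b => x b = 1)

lemma wt_eq_card_suppF (x : V n) : wt x = (suppF x).card := rfl

lemma mem_suppF {x : V n} {b : Fin n} : b ∈ suppF x ↔ x b = 1 := by
  simp [suppF]

lemma eq_of_suppF_eq {x y : V n} (h : suppF x = suppF y) : x = y := by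
  funext b
  rcases (show ∀ a : ZMod 2, a = 0 ∨ a = 1 by decide) (x b) with hx | hx <;>
    rcases (show ∀ a : ZMod 2, a = 0 ∨ a = 1 by decide) (y b) with hy | hy
  · rw [hx, hy]
  · exfalso
    have : b ∈ suppF y := mem_suppF.mpr hy
    rw [← h] at this
    rw [mem_suppF] at this
    rw [hx] at this
    exact absurd this (by decide)
  · exfalso
    have : b ∈ suppF x := mem_suppF.mpr hx
    rw [h] at this
    rw [mem_suppF] at this
    rw [hy] at this
    exact absurd this (by decide)
  · rw [hx, hy]

lemma suppF_indic (I : Finset (Fin n)) : suppF (indic I) = I := by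
  ext b
  simp only [suppF, indic, Finset.mem_filter, Finset.mem_univ, true_and]
  by_cases hb : b ∈ I
  · simp [hb]
  · simp [hb]

/-- multi-step downward closure -/
lemma down_multi (B : Finset (V n))
    (hdown : ∀ x ∈ B, ∀ i, x i = 1 → x + Pi.single i 1 ∈ B) :
    ∀ (k : ℕ) (x y : V n), x ∈ B → (∀ b, y b = 1 → x b = 1) →
      (Finset.univ.filter (fun b => x b ≠ y b)).card ≤ k → y ∈ B := by
  intro k
  induction k with
  | zero =>
    intro x y hx hle hcard
    have : x = y := by
      funext b
      by_contra hb
      have : b ∈ Finset.univ.filter (fun b => x b ≠ y b) := by simp [hb]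
      have := Finset.card_pos.mpr ⟨b, this⟩
      omega
    rwa [← this]
  | succ k IH =>
    intro x y hx hle hcard
    by_cases hxy : x = y
    · rwa [← hxy]
    · obtain ⟨b, hb⟩ := Function.ne_iff.mp hxy
      have hyb : y b = 0 := by
        rcases (show ∀ a : ZMod 2, a = 0 ∨ a = 1 by decide) (y b) with h | h
        · exact h
        · exact absurd (hle b h) (by rw [h] at hb; exact fun hh => hb hh)
      have hxb : x b = 1 := by
        rcases (show ∀ a : ZMod 2, a = 0 ∨ a = 1 by decide) (x b) with h | h
        · exact absurd (h.trans hyb.symm) hb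
        · exact h
      set x' := x + Pi.single b 1 with hx'
      have hx'B : x' ∈ B := hdown x hx b hxb
      refine IH x' y hx'B ?_ ?_
      · intro c hc
        by_cases hcb : c = b
        · subst hcb
          rw [hyb] at hc
          exact absurd hc (by decide)
        · rw [hx', flip_apply_ne b x hcb]
          exact hle c hc
      · have hset : Finset.univ.filter (fun c => x' c ≠ y c)
            = (Finset.univ.filter (fun c => x c ≠ y c)).erase b := by
          ext c
          simp only [Finset.mem_filter, Finset.mem_univ, true_and, Finset.mem_erase]
          by_cases hcb : c = b
          · subst hcb
            rw [hx']
            constructor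
            · intro hcon
              exfalso
              apply hcon
              rw [flip_apply_same c x, hxb, hyb]
              decide
            · intro ⟨hcon, _⟩
              exact absurd rfl hcon
          · rw [hx', flip_apply_ne b x hcb]
            constructor
            · intro hne; exact ⟨hcb, hne⟩
            · intro ⟨_, hne⟩; exact hne
        rw [hset]
        have hbmem : b ∈ Finset.univ.filter (fun c => x c ≠ y c) := by simp [hb]
        rw [Finset.card_erase_of_mem hbmem]
        have := Finset.card_pos.mpr ⟨b, hbmem⟩
        omega

lemma indicator_mem (B : Finset (V n)) (hB : B.Nonempty) (hmaj : MajClosed B)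
    (hdown : ∀ x ∈ B, ∀ i, x i = 1 → x + Pi.single i 1 ∈ B) :
    ∀ (k : ℕ) (I : Finset (Fin n)), I.card ≤ k →
      (∀ a ∈ I, ∃ x ∈ B, x a = 1) →
      (∀ a ∈ I, ∀ b ∈ I, a ≠ b → indic {a, b} ∈ B) → indic I ∈ B := by
  intro k
  induction k with
  | zero =>
    intro I hI _ _
    have : I = ∅ := Finset.card_eq_zero.mp (by omega)
    subst this
    obtain ⟨x, hx⟩ := hB
    refine down_multi B hdown ((Finset.univ : Finset (Fin n)).card) x (indic ∅) hx ?_ ?_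
    · intro b hb
      simp only [indic, Finset.notMem_empty, if_false] at hb
      exact absurd hb (by decide)
    · exact Finset.card_le_card (Finset.subset_univ _)
  | succ k IH =>
    intro I hI hact hpair
    by_cases hI2 : I.card ≤ 2
    · have h012 : I.card = 0 ∨ I.card = 1 ∨ I.card = 2 := by omega
      rcases h012 with h | h | h
      · have : I = ∅ := Finset.card_eq_zero.mp h
        subst this
        obtain ⟨x, hx⟩ := hB
        refine down_multi B hdown ((Finset.univ : Finset (Fin n)).card) x (indic ∅) hx ?_ ?_
        · intro b hb
          simp only [indic, Finset.notMem_empty, if_false] at hb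
          exact absurd hb (by decide)
        · exact Finset.card_le_card (Finset.subset_univ _)
      · obtain ⟨a, ha⟩ := Finset.card_eq_one.mp h
        subst ha
        obtain ⟨x, hx, hxa⟩ := hact a (Finset.mem_singleton_self a)
        refine down_multi B hdown ((Finset.univ : Finset (Fin n)).card) x (indic {a}) hx ?_ ?_
        · intro b hb
          simp only [indic, Finset.mem_singleton] at hb
          by_cases hba : b = a
          · subst hba; exact hxa
          · rw [if_neg hba] at hb
            exact absurd hb (by decide)
        · exact Finset.card_le_card (Finset.subset_univ _)
      · obtain ⟨a, b, hab, hI⟩ := Finset.card_eq_two.mp h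
        subst hI
        exact hpair a (by simp) b (by simp) hab
    · push_neg at hI2
      obtain ⟨a, ha, b, hb, hab⟩ := Finset.one_lt_card.mp (show 1 < I.card by omega)
      have hmed : med (indic (I.erase a)) (indic (I.erase b)) (indic {a, b}) = indic I := by
        funext c
        show maj (indic (I.erase a) c) (indic (I.erase b) c) (indic {a,b} c) = indic I c
        by_cases hc : c ∈ I
        · rw [show indic I c = 1 by simp [indic, hc]]
          by_cases hca : c = a
          · subst hca
            rw [show indic (I.erase c) c = 0 by simp [indic]]
            rw [show indic (I.erase b) c = 1 by simp [indic, Finset.mem_erase, hab, hc]]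
            rw [show indic ({c, b} : Finset (Fin n)) c = 1 by simp [indic]]
            decide
          · by_cases hcb : c = b
            · subst hcb
              rw [show indic (I.erase a) c = 1 by
                simp [indic, Finset.mem_erase, hca, hc]]
              rw [show indic (I.erase c) c = 0 by simp [indic]]
              rw [show indic ({a, c} : Finset (Fin n)) c = 1 by simp [indic]]
              decide
            · rw [show indic (I.erase a) c = 1 by simp [indic, Finset.mem_erase, hca, hc]]
              rw [show indic (I.erase b) c = 1 by simp [indic, Finset.mem_erase, hcb, hc]]
              rw [maj_aab]
        · have hca : c ≠ a := fun h => hc (h ▸ ha)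
          have hcb : c ≠ b := fun h => hc (h ▸ hb)
          rw [show indic I c = 0 by simp [indic, hc]]
          rw [show indic (I.erase a) c = 0 by simp [indic, Finset.mem_erase, hc]]
          rw [show indic (I.erase b) c = 0 by simp [indic, Finset.mem_erase, hc]]
          rw [show indic ({a, b} : Finset (Fin n)) c = 0 by simp [indic, hca, hcb]]
          decide
      rw [← hmed]
      have hIea : indic (I.erase a) ∈ B := by
        refine IH (I.erase a) ?_ ?_ ?_
        · rw [Finset.card_erase_of_mem ha]; omega
        · intro c hc; exact hact c (Finset.mem_of_mem_erase hc)
        · intro c hc e he hce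
          exact hpair c (Finset.mem_of_mem_erase hc) e (Finset.mem_of_mem_erase he) hce
      have hIeb : indic (I.erase b) ∈ B := by
        refine IH (I.erase b) ?_ ?_ ?_
        · rw [Finset.card_erase_of_mem hb]; omega
        · intro c hc; exact hact c (Finset.mem_of_mem_erase hc)
        · intro c hc e he hce
          exact hpair c (Finset.mem_of_mem_erase hc) e (Finset.mem_of_mem_erase he) hce
      have hpr : indic ({a, b} : Finset (Fin n)) ∈ B := hpair a ha b hb hab
      exact hmaj _ hIea _ hIeb _ hpr

end Assembly



lemma key {n d : ℕ} (hd : 1 ≤ d) (A : Finset (V n)) (hmaj : MajClosed A) :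
    (∃ (u : Fin (d+1) → Fin n) (x : V n) (v : Fin (d+1) → V n),
      (∀ j, v j (u j) = 1) ∧ (∀ i j, i ≠ j → v j (u i) = 0) ∧
      (∀ ε : Fin (d+1) → ZMod 2, x + ∑ j, ε j • v j ∈ A)) ∨
    ((A.card : ℝ) ≤ (1 + (n:ℝ)/d) ^ d) := by
  classical
  rcases A.eq_empty_or_nonempty with rfl | hAne
  · right
    simp only [Finset.card_empty, Nat.cast_zero]
    positivity
  obtain ⟨B, hBcard, hBmaj, hBdown, hBshat⟩ := exists_down (∑ x ∈ A, wt x) A le_rfl hmaj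
  have hBne : B.Nonempty := by
    rw [← Finset.card_pos, hBcard]
    exact Finset.card_pos.mpr hAne
  by_cases hbig : ∃ x ∈ B, d + 1 ≤ wt x
  · left
    obtain ⟨x, hxB, hwt⟩ := hbig
    rw [wt_eq_card_suppF] at hwt
    obtain ⟨S, hSsub, hScard⟩ := Finset.exists_subset_card_eq hwt
    have hu : ∀ j : Fin (d+1), ((S.orderIsoOfFin hScard) j : Fin n) ∈ S :=
      fun j => ((S.orderIsoOfFin hScard) j).2
    set u : Fin (d+1) → Fin n := fun j => ((S.orderIsoOfFin hScard) j : Fin n) with hudef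
    have hshatB : ∀ τ : Fin (d+1) → ZMod 2, ∃ y ∈ B, ∀ j, y (u j) = τ j := by
      intro τ
      set y : V n := fun b =>
        if hb : b ∈ S then τ ((S.orderIsoOfFin hScard).symm ⟨b, hb⟩) else 0 with hy
      refine ⟨y, ?_, ?_⟩
      · refine down_multi B hBdown ((Finset.univ : Finset (Fin n)).card) x y hxB ?_
          (Finset.card_le_card (Finset.subset_univ _))
        intro b hb
        by_cases hbS : b ∈ S
        · exact mem_suppF.mp (hSsub hbS)
        · exfalso
          have hy0 : y b = 0 := by
            simp only [hy]
            rw [dif_neg hbS]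
          rw [hy0] at hb
          exact absurd hb (by decide)
      · intro j
        have hmem : u j ∈ S := hu j
        rw [hy]
        show (if hb : u j ∈ S then τ ((S.orderIsoOfFin hScard).symm ⟨u j, hb⟩) else 0) = τ j
        rw [dif_pos hmem]
        congr 1
        have hsub : (⟨u j, hmem⟩ : {a // a ∈ S}) = (S.orderIsoOfFin hScard) j := by
          apply Subtype.ext
          rfl
        rw [hsub, OrderIso.symm_apply_apply]
    have hshatA := hBshat (d+1) u hshatB
    obtain ⟨xx, v, hv1, hv2, _, hv4⟩ := thmC (d+1) A hmaj u hshatA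
    exact ⟨u, xx, v, hv1, hv2, hv4⟩
  · right
    push_neg at hbig
    set E : Fin n → Fin n → Prop := fun a b => a ≠ b ∧ indic {a, b} ∉ B with hE
    letI hdecE : DecidableRel E := fun a b => by
      simp only [hE]; exact instDecidableAnd
    have hsym : ∀ a b, E a b → E b a := by
      intro a b hab
      simp only [hE] at hab ⊢
      refine ⟨hab.1.symm, ?_⟩
      rw [Finset.pair_comm b a]
      exact hab.2
    have hirr : ∀ a, ¬ E a a := by
      intro a ha
      simp only [hE] at ha
      exact ha.1 rfl
    set s := Finset.univ.filter (fun a : Fin n => ∃ x ∈ B, x a = 1) with hs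
    have hinj : ∀ x ∈ B, suppF x ∈ indFam E s := by
      intro x hx
      simp only [indFam, Finset.mem_filter, Finset.mem_powerset]
      constructor
      · intro b hb
        simp only [hs, Finset.mem_filter, Finset.mem_univ, true_and]
        exact ⟨x, hx, mem_suppF.mp hb⟩
      · intro a ha b hb hab
        simp only [hE]
        intro ⟨_, hcon⟩
        apply hcon
        refine down_multi B hBdown ((Finset.univ : Finset (Fin n)).card) x
          (indic {a, b}) hx ?_ (Finset.card_le_card (Finset.subset_univ _))
        intro c hc
        simp only [indic] at hc
        by_cases hcab : c ∈ ({a, b} : Finset (Fin n))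
        · rcases Finset.mem_insert.mp hcab with rfl | hcb
          · exact mem_suppF.mp ha
          · rw [Finset.mem_singleton] at hcb
            subst hcb
            exact mem_suppF.mp hb
        · rw [if_neg hcab] at hc
          exact absurd hc (by decide)
    have hcard1 : B.card ≤ (indFam E s).card :=
      Finset.card_le_card_of_injOn suppF (fun x hx => hinj x hx)
        (fun x _ y _ h => eq_of_suppF_eq h)
    have halpha : alphaG E s ≤ d := by
      apply Finset.sup_le
      intro I hI
      simp only [indFam, Finset.mem_filter, Finset.mem_powerset] at hI
      have hIB : indic I ∈ B := by
        refine indicator_mem B hBne hBmaj hBdown I.card I le_rfl ?_ ?_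
        · intro a ha
          have hmem := hI.1 ha
          simp only [hs, Finset.mem_filter, Finset.mem_univ, true_and] at hmem
          exact hmem
        · intro a ha b hb hab
          have hni := hI.2 a ha b hb hab
          simp only [hE] at hni
          push_neg at hni
          exact hni hab
      have hwt := hbig (indic I) hIB
      rw [wt_eq_card_suppF, suppF_indic] at hwt
      omega
    have h2 : (indFam E s).card ≤ g s.card d :=
      indFam_card_le E hsym hirr s.card s le_rfl d halpha
    have h3 : g s.card d ≤ g n d := by
      refine g_mono d ?_
      calc s.card ≤ (Finset.univ : Finset (Fin n)).card := Finset.card_le_univ s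
        _ = n := by rw [Finset.card_univ, Fintype.card_fin]
    have h4 := g_le_real n d hd
    have hAB : (A.card : ℝ) = (B.card : ℝ) := by rw [hBcard]
    rw [hAB]
    calc (B.card : ℝ) ≤ (g n d : ℝ) := by exact_mod_cast le_trans hcard1 (le_trans h2 h3)
      _ ≤ (1 + (n:ℝ)/d) ^ d := h4

end Stmt14

theorem stmt_14 {n d m : ℕ} (hd1 : 1 ≤ d) (hdn : d ≤ n)
    (f : (Fin n → ZMod 2) → Bool) (hf : AffineDisperser (d + 1) f)
    (φs : Fin m → List (Finset (Fin n × ZMod 2)))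
    (h2 : ∀ i, IsKCnf 2 (φs i))
    (heq : ∀ x, f x = true ↔ ∃ i, x ∈ SatAssignments (φs i)) :
    ({x | f x = true}.ncard : ℝ) / ((n : ℝ) / d + 1) ^ d ≤ (m : ℝ) := by
  classical
  have hDpos : (0:ℝ) < ((n:ℝ)/d + 1) ^ d := by positivity
  rw [div_le_iff₀ hDpos]
  have hper : ∀ i : Fin m,
      ((Finset.univ.filter (fun x : Stmt14.V n => x ∈ SatAssignments (φs i))).card : ℝ)
        ≤ ((n:ℝ)/d + 1) ^ d := by
    intro i
    set A := Finset.univ.filter (fun x : Stmt14.V n => x ∈ SatAssignments (φs i)) with hA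
    have hmaj : Stmt14.MajClosed A := by
      intro x hx y hy z hz
      simp only [hA, Finset.mem_filter, Finset.mem_univ, true_and] at hx hy hz ⊢
      exact Stmt14.sat_med (φs i) (h2 i) hx hy hz
    rcases Stmt14.key hd1 A hmaj with ⟨u, x, v, hdiag, hoff, hsums⟩ | hle
    · exfalso
      have hli : LinearIndependent (ZMod 2) v := by
        rw [Fintype.linearIndependent_iff]
        intro gc hsum j
        have hcf := congrFun hsum (u j)
        rw [Finset.sum_apply] at hcf
        have hterm : ∀ i' ∈ Finset.univ, i' ≠ j → (gc i' • v i') (u j) = 0 := by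
          intro i' _ hij
          have hz := hoff j i' (fun h => hij h.symm)
          show gc i' • (v i' (u j)) = 0
          rw [hz, smul_zero]
        rw [Finset.sum_eq_single j hterm (fun h => absurd (Finset.mem_univ j) h)] at hcf
        have : gc j • (v j (u j)) = 0 := hcf
        rw [hdiag j, smul_eq_mul, mul_one] at this
        exact this
      set W := Submodule.span (ZMod 2) (Set.range v) with hW
      have hrank : Module.finrank (ZMod 2) W = d + 1 := by
        rw [hW, finrank_span_eq_card hli, Fintype.card_fin]
      obtain ⟨a, haW, b, hbW, hne⟩ := hf W x hrank
      have hallW : ∀ w ∈ W, f (x + w) = true := by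
        intro w hw
        obtain ⟨c, hc⟩ := (Submodule.mem_span_range_iff_exists_fun (ZMod 2)).mp hw
        have hmem := hsums c
        rw [hc] at hmem
        simp only [hA, Finset.mem_filter, Finset.mem_univ, true_and] at hmem
        exact (heq _).mpr ⟨i, hmem⟩
      exact hne ((hallW a haW).trans ((hallW b hbW).symm))
    · rw [show (n:ℝ)/d + 1 = 1 + (n:ℝ)/d by ring]
      exact hle
  set T := Finset.univ.filter (fun x : Stmt14.V n => f x = true) with hT
  have hncard : ({x | f x = true} : Set (Stmt14.V n)).ncard = T.card := by
    rw [← Set.ncard_coe_finset]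
    congr 1
    ext x
    simp [hT]
  rw [hncard]
  have hsub : T ⊆ Finset.univ.biUnion (fun i : Fin m =>
      Finset.univ.filter (fun x : Stmt14.V n => x ∈ SatAssignments (φs i))) := by
    intro x hx
    simp only [hT, Finset.mem_filter, Finset.mem_univ, true_and] at hx
    obtain ⟨i, hi⟩ := (heq x).mp hx
    refine Finset.mem_biUnion.mpr ⟨i, Finset.mem_univ i, ?_⟩
    simp only [Finset.mem_filter, Finset.mem_univ, true_and]
    exact hi
  have hTcard : (T.card : ℝ) ≤ ∑ i : Fin m,
      ((Finset.univ.filter (fun x : Stmt14.V n => x ∈ SatAssignments (φs i))).card : ℝ) := by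
    have h1 := le_trans (Finset.card_le_card hsub) Finset.card_biUnion_le
    exact_mod_cast h1
  calc (T.card : ℝ)
      ≤ ∑ i : Fin m, ((Finset.univ.filter
          (fun x : Stmt14.V n => x ∈ SatAssignments (φs i))).card : ℝ) := hTcard
    _ ≤ ∑ _i : Fin m, ((n:ℝ)/d + 1) ^ d := Finset.sum_le_sum (fun i _ => hper i)
    _ = m * ((n:ℝ)/d + 1) ^ d := by
        rw [Finset.sum_const, Finset.card_univ, Fintype.card_fin, nsmul_eq_mul]
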